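/- Let E be a real Hilbert space, L a closed linear subspace of E, and C a nonempty closed convex cone in E with L ⊆ C. Then for every θ ∈ E, ‖θ − P_L(θ)‖² − ‖θ − P_C(θ)‖² = ‖P_L(θ) − P_C(θ)‖². -/

import Mathlib

open RealInnerProductSpace


/-- Let E be a real Hilbert space, L a closed linear subspace of E, and C a
nonempty closed convex cone in E with L ⊆ C. Then for every θ ∈ E,
‖θ − P_L(θ)‖² − ‖θ − P_C(θ)‖² = ‖P_L(θ) − P_C(θ)‖². The metric projections are encoded
as functions `PL`, `PC` satisfying the nearest-point property. -/
theorem stmt0 {E : Type*} [NormedAddCommGroup E] [InnerProductSpace ℝ E] [CompleteSpace E]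
    (L : Submodule ℝ E) (hLclosed : IsClosed (L : Set E))
    (C : Set E) (hCne : C.Nonempty) (hCclosed : IsClosed C) (hCconv : Convex ℝ C)
    (hCcone : ∀ c ∈ C, ∀ r : ℝ, 0 ≤ r → r • c ∈ C)
    (hLC : (L : Set E) ⊆ C)
    (PL PC : E → E)
    (hPL : ∀ x : E, PL x ∈ L ∧ ∀ y ∈ (L : Set E), ‖x - PL x‖ ≤ ‖x - y‖)
    (hPC : ∀ x : E, PC x ∈ C ∧ ∀ y ∈ C, ‖x - PC x‖ ≤ ‖x - y‖) :
    ∀ θ : E, ‖θ - PL θ‖ ^ 2 - ‖θ - PC θ‖ ^ 2 = ‖PL θ - PC θ‖ ^ 2 := by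
  intro θ
  obtain ⟨hC1, hC2⟩ := hPC θ
  obtain ⟨hL1, _⟩ := hPL θ
  haveI : Nonempty C := hCne.to_subtype
  -- C is closed under addition (convex cone)
  have hadd : ∀ a ∈ C, ∀ b ∈ C, a + b ∈ C := by
    intro a ha b hb
    have hm : (1/2 : ℝ) • a + (1/2 : ℝ) • b ∈ C :=
      hCconv ha hb (by norm_num) (by norm_num) (by norm_num)
    have := hCcone _ hm 2 (by norm_num)
    simpa [smul_smul, smul_add] using this
  -- variational inequality
  have hinf : ‖θ - PC θ‖ = ⨅ w : C, ‖θ - w‖ := by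
    apply le_antisymm
    · exact le_ciInf fun w => hC2 w w.2
    · refine ciInf_le ?_ (⟨PC θ, hC1⟩ : C)
      exact ⟨0, by rintro x ⟨w, rfl⟩; positivity⟩
  have key : ∀ w ∈ C, (inner ℝ (θ - PC θ) (w - PC θ) : ℝ) ≤ 0 :=
    (norm_eq_iInf_iff_real_inner_le_zero hCconv hC1).mp hinf
  -- ⟪θ - PC θ, PC θ⟫ = 0
  have hPC0 : (inner ℝ (θ - PC θ) (PC θ) : ℝ) = 0 := by
    have h2 := key ((2 : ℝ) • PC θ) (hCcone _ hC1 2 (by norm_num))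
    have h0 := key ((0 : ℝ) • PC θ) (hCcone _ hC1 0 le_rfl)
    have e2 : (2 : ℝ) • PC θ - PC θ = PC θ := by
      rw [two_smul]; abel
    rw [e2] at h2
    rw [zero_smul, zero_sub, inner_neg_right] at h0
    linarith
  -- ⟪θ - PC θ, l⟫ = 0 for l ∈ L
  have hLorth : ∀ l ∈ L, (inner ℝ (θ - PC θ) (l) : ℝ) = 0 := by
    intro l hl
    have hp : ∀ m ∈ L, (inner ℝ (θ - PC θ) ((m : E)) : ℝ) ≤ 0 := by
      intro m hm
      have := key (PC θ + m) (hadd _ hC1 _ (hLC hm))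
      simpa using this
    have h1 := hp l hl
    have h2 := hp (-l) (neg_mem hl)
    rw [inner_neg_right] at h2
    linarith
  have horth : (inner ℝ (θ - PC θ) (PC θ - PL θ) : ℝ) = 0 := by
    rw [inner_sub_right, hPC0, hLorth _ hL1]; ring
  have hdecomp : θ - PL θ = (θ - PC θ) + (PC θ - PL θ) := by abel
  have hpyth : ‖θ - PL θ‖ ^ 2 = ‖θ - PC θ‖ ^ 2 + ‖PC θ - PL θ‖ ^ 2 := by
    rw [hdecomp]
    rw [norm_add_sq_real, horth]
    ring
  rw [hpyth, norm_sub_rev (PL θ)]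
  ring
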